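/- The orbits of the permutation g on [0,n-1] are exactly the congruence classes modulo λ = gcd(p',q'); in particular, g has exactly λ orbits. -/
import Mathlib

def g (p' q' i : ℕ) : ℕ :=
  if i + 1 < q' then i + p' else if i + 1 = q' then p' - 1 else i - q'

lemma g_step (p' q' : ℕ) (hq : 1 ≤ q') (x : ℕ) (hx : x < p' + q' - 1)
    (hy : (x + p') % (p' + q') ≠ p' + q' - 1) :
    g p' q' x = (x + p') % (p' + q') := by
  unfold g
  rcases lt_trichotomy (x + 1) q' with h | h | h
  · rw [if_pos h, Nat.mod_eq_of_lt (by omega)]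
  · exfalso; apply hy; rw [Nat.mod_eq_of_lt (by omega)]; omega
  · rw [if_neg (by omega), if_neg (by omega)]
    rw [Nat.mod_eq_sub_mod (by omega), Nat.mod_eq_of_lt (by omega)]
    omega

lemma g_special (p' q' : ℕ) (hq : 1 ≤ q') : g p' q' (q' - 1) = p' - 1 := by
  unfold g
  rw [if_neg (by omega), if_pos (by omega)]

/-- Forward orbit of `i` reaches every `(i + t*p') % (p'+q')` that is not `n`. -/
lemma reach (p' q' : ℕ) (hp : 1 ≤ p') (hq : 1 ≤ q') (i : ℕ) (hi : i < p' + q' - 1) :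
    ∀ t : ℕ, (i + t * p') % (p' + q') ≠ p' + q' - 1 →
      ∃ k, (g p' q')^[k] i = (i + t * p') % (p' + q') := by
  have step : ∀ s : ℕ, ((i + s * p') % (p' + q') + p') % (p' + q')
      = (i + (s + 1) * p') % (p' + q') := by
    intro s
    rw [Nat.mod_add_mod]
    congr 1
    ring
  intro t
  induction t using Nat.strong_induction_on with
  | _ t ih =>
    intro hne
    rcases t with _ | s
    · exact ⟨0, by simp [Nat.mod_eq_of_lt (show i < p' + q' by omega)]⟩
    by_cases hx : (i + s * p') % (p' + q') = p' + q' - 1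
    · -- predecessor is the skipped point n; go back two steps
      rcases s with _ | u
      · exfalso
        rw [Nat.zero_mul, Nat.add_zero, Nat.mod_eq_of_lt (by omega)] at hx
        omega
      have hx' : ((i + u * p') % (p' + q') + p') % (p' + q') = p' + q' - 1 :=
        (step u).trans hx
      have hwm : (i + u * p') % (p' + q') < p' + q' := Nat.mod_lt _ (by omega)
      have hnp : (p' + q' - 1 + p') % (p' + q') = p' - 1 := by
        rw [Nat.mod_eq_sub_mod (by omega), Nat.mod_eq_of_lt (by omega)]
        omega
      have hwne : (i + u * p') % (p' + q') ≠ p' + q' - 1 := by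
        intro h
        rw [h, hnp] at hx'
        omega
      have hwq : (i + u * p') % (p' + q') = q' - 1 := by
        rcases Nat.lt_or_ge ((i + u * p') % (p' + q') + p') (p' + q') with h | h
        · rw [Nat.mod_eq_of_lt h] at hx'; omega
        · rw [Nat.mod_eq_sub_mod h, Nat.mod_eq_of_lt (by omega)] at hx'; omega
      obtain ⟨k, hk⟩ := ih u (by omega) hwne
      have hfinal : (i + (u + 1 + 1) * p') % (p' + q') = p' - 1 := by
        rw [← step (u + 1), hx, hnp]
      refine ⟨k + 1, ?_⟩
      rw [Function.iterate_succ_apply', hk, hwq, g_special p' q' hq, hfinal]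
    · -- ordinary single step
      obtain ⟨k, hk⟩ := ih s (by omega) hx
      have hxm : (i + s * p') % (p' + q') < p' + q' := Nat.mod_lt _ (by omega)
      have hgs : g p' q' ((i + s * p') % (p' + q')) = (i + (s + 1) * p') % (p' + q') := by
        rw [← step s]
        exact g_step p' q' hq _ (by omega) (by rw [step s]; exact hne)
      exact ⟨k + 1, by rw [Function.iterate_succ_apply', hk, hgs]⟩

/-- Solvability of the linear congruence. -/
lemma exists_t (p' q' i j : ℕ) (hp : 1 ≤ p') (hq : 1 ≤ q')
    (hmod : j % Nat.gcd p' q' = i % Nat.gcd p' q') :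
    ∃ t : ℕ, (i + t * p') % (p' + q') = j % (p' + q') := by
  set l := Nat.gcd p' q' with hldef
  set m := p' + q' with hm
  have hm0 : 0 < m := by omega
  have hgcd : Nat.gcd p' m = l := by
    rw [hm, Nat.add_comm p' q', Nat.gcd_add_self_right]
  have hdvd : (l : ℤ) ∣ (i : ℤ) - j := Nat.modEq_iff_dvd.mp hmod
  obtain ⟨c, hc⟩ := hdvd
  set A := Int.gcdA (p' : ℤ) (m : ℤ) with hA
  set B := Int.gcdB (p' : ℤ) (m : ℤ) with hB
  have hbez : (l : ℤ) = p' * A + m * B := by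
    have := Int.gcd_eq_gcd_ab (p' : ℤ) (m : ℤ)
    rwa [Int.gcd_natCast_natCast, hgcd] at this
  set T : ℤ := -(A * c) with hT
  have h2 : (i : ℤ) + T * p' = j + m * (B * c) := by
    rw [hT]
    linear_combination hc + c * hbez
  have hmz : (m : ℤ) ≠ 0 := by exact_mod_cast hm0.ne'
  have htnn : 0 ≤ T % m := Int.emod_nonneg T hmz
  have hTm : T % (m : ℤ) ≡ T [ZMOD (m : ℤ)] := Int.emod_emod_of_dvd T dvd_rfl
  refine ⟨(T % (m : ℤ)).toNat, ?_⟩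
  have key : (((i + (T % (m : ℤ)).toNat * p') % m : ℕ) : ℤ) = ((j % m : ℕ) : ℤ) := by
    push_cast
    rw [Int.toNat_of_nonneg htnn]
    calc ((i : ℤ) + T % m * p') % m
        = ((i : ℤ) + T * p') % m := Int.ModEq.add_left (i : ℤ) (hTm.mul_right (p' : ℤ))
      _ = ((j : ℤ) + m * (B * c)) % m := by rw [h2]
      _ = (j : ℤ) % m := Int.add_mul_emod_self_left ..
  exact_mod_cast key

/-- `g` keeps `[0,n)` stable and preserves residues mod the gcd. -/
lemma g_mem (p' q' : ℕ) (hp : 1 ≤ p') (hq : 1 ≤ q') (x : ℕ) (hx : x < p' + q' - 1) :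
    g p' q' x < p' + q' - 1 ∧ g p' q' x % Nat.gcd p' q' = x % Nat.gcd p' q' := by
  set l := Nat.gcd p' q' with hldef
  have hdp : l ∣ p' := Nat.gcd_dvd_left _ _
  have hdq : l ∣ q' := Nat.gcd_dvd_right _ _
  have hl : 1 ≤ l := Nat.gcd_pos_of_pos_left _ hp
  have key : ∀ c : ℕ, 1 ≤ c → l ∣ c → (c - 1) % l = l - 1 := by
    intro c hc hdvd
    obtain ⟨a, ha⟩ := hdvd
    match a with
    | 0 => omega
    | Nat.succ a =>
      have h2 : c - 1 = l * a + (l - 1) := by rw [Nat.mul_succ] at ha; omega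
      rw [h2, Nat.mul_add_mod, Nat.mod_eq_of_lt (by omega)]
  obtain ⟨a, ha⟩ := hdp
  obtain ⟨b, hb⟩ := hdq
  unfold g
  split_ifs with h1 h2
  · refine ⟨by omega, ?_⟩
    rw [ha, Nat.add_mul_mod_self_left]
  · refine ⟨by omega, ?_⟩
    have hx' : x = q' - 1 := by omega
    rw [hx', key p' hp ⟨a, ha⟩, key q' hq ⟨b, hb⟩]
  · refine ⟨by omega, ?_⟩
    have hq2 : q' ≤ x := by omega
    conv_rhs => rw [← Nat.sub_add_cancel hq2]
    rw [hb, Nat.add_mul_mod_self_left]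

lemma iter_mem (p' q' : ℕ) (hp : 1 ≤ p') (hq : 1 ≤ q') (i : ℕ) (hi : i < p' + q' - 1) :
    ∀ k : ℕ, (g p' q')^[k] i < p' + q' - 1 ∧
      (g p' q')^[k] i % Nat.gcd p' q' = i % Nat.gcd p' q' := by
  intro k
  induction k with
  | zero => exact ⟨hi, rfl⟩
  | succ k ih =>
    rw [Function.iterate_succ_apply']
    obtain ⟨h1, h2⟩ := g_mem p' q' hp hq _ ih.1
    exact ⟨h1, h2.trans ih.2⟩

theorem stmt_6 (p' q' n : ℕ) (hp : 1 ≤ p') (hq : 1 ≤ q') (hn : p' + q' - 1 = n)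
    (l : ℕ) (hl : l = Nat.gcd p' q') :
    (∀ i < n, {j | j < n ∧ ∃ k : ℕ, (g p' q')^[k] i = j}
        = {j | j < n ∧ j % l = i % l}) ∧
    {S : Set ℕ | ∃ i < n, S = {j | j < n ∧ ∃ k : ℕ, (g p' q')^[k] i = j}}.ncard = l := by
  subst hn hl
  set l := Nat.gcd p' q' with hldef
  set n := p' + q' - 1 with hndef
  have hl1 : 1 ≤ l := Nat.gcd_pos_of_pos_left _ hp
  have hlp : l ≤ p' := Nat.le_of_dvd hp (Nat.gcd_dvd_left _ _)
  have hln : l ≤ n := by omega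
  have part1 : ∀ i < n, {j | j < n ∧ ∃ k : ℕ, (g p' q')^[k] i = j}
      = {j | j < n ∧ j % l = i % l} := by
    intro i hi
    ext j
    simp only [Set.mem_setOf_eq]
    constructor
    · rintro ⟨hj, k, rfl⟩
      exact ⟨hj, (iter_mem p' q' hp hq i hi k).2⟩
    · rintro ⟨hj, hjm⟩
      refine ⟨hj, ?_⟩
      obtain ⟨t, ht⟩ := exists_t p' q' i j hp hq hjm
      rw [Nat.mod_eq_of_lt (show j < p' + q' by omega)] at ht
      obtain ⟨k, hk⟩ := reach p' q' hp hq i hi t (by rw [ht]; omega)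
      exact ⟨k, by rw [hk, ht]⟩
  refine ⟨part1, ?_⟩
  have himg : {S : Set ℕ | ∃ i < n, S = {j | j < n ∧ ∃ k : ℕ, (g p' q')^[k] i = j}}
      = (fun r => {j | j < n ∧ j % l = r}) '' Set.Iio l := by
    ext S
    simp only [Set.mem_setOf_eq, Set.mem_image, Set.mem_Iio]
    constructor
    · rintro ⟨i, hi, rfl⟩
      exact ⟨i % l, Nat.mod_lt _ (by omega), (part1 i hi).symm⟩
    · rintro ⟨r, hr, rfl⟩
      refine ⟨r, by omega, ?_⟩
      rw [part1 r (by omega)]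
      simp only [Nat.mod_eq_of_lt hr]
  rw [himg, Set.ncard_image_of_injOn, ← Finset.coe_range, Set.ncard_coe_finset,
    Finset.card_range]
  intro r hr r' hr' heq
  simp only [Set.mem_Iio] at hr hr'
  have hmem : r ∈ (fun r : ℕ => {j | j < n ∧ j % l = r}) r :=
    ⟨by omega, Nat.mod_eq_of_lt hr⟩
  rw [heq] at hmem
  have h2 : r % l = r' := hmem.2
  rwa [Nat.mod_eq_of_lt hr] at h2
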